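/- arXiv:1408.1288 — 4 statements merged into one kernel-verified Lean document; each statement's English description precedes it below -/
import Mathlib

section
/- For natural numbers n and r with 1 ≤ r ≤ n−1, (n−1) · (binom(n−1, r−1) − binom(n−r−1, r−1)) ≤ r·(r−1) · binom(n−1, r−1). -/
open Finset Filter Real Asymptotics

noncomputable section

open Classical in
/-- Probability of the event `E` under the product Bernoulli(`p`) measure on `ι → Bool`
(each coordinate `true`, i.e. "retained", independently with probability `p`). -/
def bprob {ι : Type*} [Fintype ι] (p : ℝ) (E : Set (ι → Bool)) : ℝ :=
  ∑ ω : ι → Bool, if ω ∈ E then ∏ e : ι, (if ω e then p else 1 - p) else 0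

open Classical in
/-- Expectation of `X` under the product Bernoulli(`p`) measure on `ι → Bool`. -/
def bexpect {ι : Type*} [Fintype ι] (p : ℝ) (X : (ι → Bool) → ℝ) : ℝ :=
  ∑ ω : ι → Bool, (∏ e : ι, (if ω e then p else 1 - p)) * X ω

/-- The threshold function `p_c(n,r) = ((r+1) log n - r log r) / C(n-1, r-1)`. -/
def pc (n r : ℕ) : ℝ :=
  (((r : ℝ) + 1) * Real.log n - (r : ℝ) * Real.log r) / ((n - 1).choose (r - 1))

/-- `A` is a family of `r`-element subsets of `[n]`. -/
def isRFamily (n r : ℕ) (A : Finset (Finset (Fin n))) : Prop :=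
  ∀ S ∈ A, S.card = r

/-- `A` induces an independent set in the random subgraph of the Kneser graph determined by
the edge sample `ω` (`ω e = true` meaning the edge `e` was retained): no retained edge, i.e.
pair of disjoint sets, has both endpoints in `A`. -/
def inducesIndep (n : ℕ) (ω : Sym2 (Finset (Fin n)) → Bool)
    (A : Finset (Finset (Fin n))) : Prop :=
  ∀ S ∈ A, ∀ T ∈ A, S ≠ T → Disjoint S T → ω s(S, T) = false

open Classical in
/-- The independence number of the random subgraph `K_p(n,r)` determined by the
edge sample `ω`: the largest size of a family of `r`-sets inducing an independent set. -/
def kneserAlpha (n r : ℕ) (ω : Sym2 (Finset (Fin n)) → Bool) : ℕ :=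
  Finset.sup
    (Finset.univ.filter fun A : Finset (Finset (Fin n)) =>
      isRFamily n r A ∧ inducesIndep n ω A)
    Finset.card

/-- The star centred at `x`: all `r`-element subsets of `[n]` containing `x`. -/
def kstar (n r : ℕ) (x : Fin n) : Finset (Finset (Fin n)) :=
  Finset.univ.filter fun S => S.card = r ∧ x ∈ S

/-- `A_x`: the subfamily of members of `A` containing `x`. -/
def subAt (n : ℕ) (A : Finset (Finset (Fin n))) (x : Fin n) : Finset (Finset (Fin n)) :=
  A.filter fun S => x ∈ S

/-- The maximum degree `d(A) = max_x |A_x|`. -/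
def maxDeg (n : ℕ) (A : Finset (Finset (Fin n))) : ℕ :=
  Finset.univ.sup fun x : Fin n => (subAt n A x).card

open Classical in
/-- `e(A)`: the number of unordered pairs `{S, T} ⊆ A` with `S ∩ T = ∅`, i.e. the number of
edges of the Kneser graph induced by `A`. -/
def eCount (n : ℕ) (A : Finset (Finset (Fin n))) : ℕ :=
  (A.sym2.filter fun e => ¬ e.IsDiag ∧ ∀ S ∈ e, ∀ T ∈ e, S ≠ T → Disjoint S T).card

open Classical in
/-- `Y`: the number of families of `r`-sets of size `C(n-1,r-1) + 1` with maximum degree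
`C(n-1,r-1)` (i.e. containing a full star) inducing an independent set in the sample `ω`. -/
def Ycount (n r : ℕ) (ω : Sym2 (Finset (Fin n)) → Bool) : ℕ :=
  (Finset.univ.filter fun A : Finset (Finset (Fin n)) =>
    isRFamily n r A ∧ A.card = (n - 1).choose (r - 1) + 1 ∧
      maxDeg n A = (n - 1).choose (r - 1) ∧ inducesIndep n ω A).card

open Classical in
/-- `X_i`: the number of families of `r`-sets of size `C(n-1,r-1)` with maximum degree
`C(n-1,r-1) - i` inducing an independent set in the sample `ω`. -/
def Xcount (n r i : ℕ) (ω : Sym2 (Finset (Fin n)) → Bool) : ℕ :=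
  (Finset.univ.filter fun A : Finset (Finset (Fin n)) =>
    isRFamily n r A ∧ A.card = (n - 1).choose (r - 1) ∧
      maxDeg n A = (n - 1).choose (r - 1) - i ∧ inducesIndep n ω A).card

lemma choose_aux : ∀ (t m k : ℕ),
    Nat.choose m (k + 1) ≤ Nat.choose (m - t) (k + 1) + t * Nat.choose (m - 1) k := by
  intro t
  induction t with
  | zero => simp
  | succ t ih =>
    intro m k
    match m with
    | 0 => simp
    | m + 1 =>
      have h1 : Nat.choose (m + 1) (k + 1) = Nat.choose m k + Nat.choose m (k + 1) :=
        Nat.choose_succ_succ m k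
      have h2 := ih m k
      have h3 : t * Nat.choose (m - 1) k ≤ t * Nat.choose m k :=
        Nat.mul_le_mul_left t (Nat.choose_le_choose k (Nat.sub_le m 1))
      have : Nat.choose (m + 1) (k + 1)
          ≤ Nat.choose (m - t) (k + 1) + t * Nat.choose m k + Nat.choose m k := by
        omega
      simpa [Nat.succ_sub_succ, Nat.succ_mul, Nat.add_assoc] using this

/-- inequality from Proposition 7:
`(n-1) (C(n-1, r-1) - C(n-r-1, r-1)) ≤ r (r-1) C(n-1, r-1)`. -/
theorem choose_diff_le (n r : ℕ) (h1 : 1 ≤ r) (h2 : r ≤ n - 1) :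
    (n - 1) * ((n - 1).choose (r - 1) - (n - r - 1).choose (r - 1))
      ≤ r * (r - 1) * (n - 1).choose (r - 1) := by
  rcases Nat.eq_or_lt_of_le h1 with h | hr2
  · simp [← h]
  -- now r ≥ 2, hence n ≥ 3
  have hn : 3 ≤ n := by omega
  have key := choose_aux r (n - 1) (r - 2)
  have hrk : r - 2 + 1 = r - 1 := by omega
  have hsub : n - 1 - r = n - r - 1 := by omega
  rw [hrk, hsub, show n - 1 - 1 = n - 2 from by omega] at key
  -- key : C(n-1, r-1) ≤ C(n-r-1, r-1) + r * C(n-2, r-2)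
  have hid : (n - 1) * Nat.choose (n - 2) (r - 2) = Nat.choose (n - 1) (r - 1) * (r - 1) := by
    have := Nat.add_one_mul_choose_eq (n - 2) (r - 2)
    have e1 : n - 2 + 1 = n - 1 := by omega
    have e2 : r - 2 + 1 = r - 1 := by omega
    simp only [Nat.succ_eq_add_one, e1, e2] at this
    exact this
  have step : (n - 1) * ((n - 1).choose (r - 1) - (n - r - 1).choose (r - 1))
      ≤ (n - 1) * (r * Nat.choose (n - 2) (r - 2)) :=
    Nat.mul_le_mul_left _ (by omega)
  calc (n - 1) * ((n - 1).choose (r - 1) - (n - r - 1).choose (r - 1))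
      ≤ (n - 1) * (r * Nat.choose (n - 2) (r - 2)) := step
    _ = r * ((n - 1) * Nat.choose (n - 2) (r - 2)) := by ring
    _ = r * (Nat.choose (n - 1) (r - 1) * (r - 1)) := by rw [hid]
    _ = r * (r - 1) * (n - 1).choose (r - 1) := by ring

end
end

section
/- Fix ε ∈ (0, 1/2), let r = r(n) be a sequence of natural numbers with 2 ≤ r(n) and r(n) = o(n^{1/2}), and let p = p(n) = (1+ε)·p_c(n, r(n)). Let Y_n be the number of families A ⊆ [n]^(r(n)) with |A| = binom(n−1,r(n)−1) + 1 and d(A) = binom(n−1,r(n)−1) that induce an independent set in K_{p(n)}(n, r(n)). Then E[Y_n] → 0 as n → ∞. -/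
open Finset Filter Real Asymptotics

noncomputable section

set_option maxHeartbeats 1000000

open Classical in
lemma sum_pi_bool {ι : Type*} [Fintype ι] (f : ι → Bool → ℝ) :
    ∑ ω : ι → Bool, ∏ e, f e (ω e) = ∏ e, (f e true + f e false) := by
  have := Finset.prod_univ_sum (fun _ : ι => (Finset.univ : Finset Bool)) (fun i b => f i b)
  rw [Fintype.piFinset_univ] at this
  rw [← this]
  congr 1; ext e
  simp [Fintype.sum_bool]


open Classical in
lemma bprob_all_false {ι : Type*} [Fintype ι] (p : ℝ) (E : Finset ι) :
    bprob p {ω : ι → Bool | ∀ e ∈ E, ω e = false} = (1 - p) ^ E.card := by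
  unfold bprob
  have key : ∀ ω : ι → Bool,
      (@ite ℝ (ω ∈ {ω : ι → Bool | ∀ e ∈ E, ω e = false}) (Classical.propDecidable _)
        (∏ e : ι, (if ω e then p else 1 - p)) 0)
      = ∏ e : ι, (if ω e then (if e ∈ E then 0 else p) else 1 - p) := by
    intro ω
    simp only [Set.mem_setOf_eq]
    by_cases h : ∀ e ∈ E, ω e = false
    · rw [if_pos h]
      apply Finset.prod_congr rfl
      intro e _
      by_cases he : ω e
      · have : e ∉ E := fun hin => by simp [h e hin] at he
        simp [he, this]
      · simp [he]
    · rw [if_neg h]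
      push_neg at h
      obtain ⟨e, heE, hωe⟩ := h
      rw [eq_comm]
      apply Finset.prod_eq_zero (Finset.mem_univ e)
      simp only [Bool.not_eq_false] at hωe
      simp [hωe, heE]
  refine Eq.trans (Finset.sum_congr rfl fun ω _ => key ω) ?_
  rw [sum_pi_bool (fun e b => if b then (if e ∈ E then 0 else p) else 1 - p)]
  have : ∀ e : ι, ((if true = true then (if e ∈ E then (0:ℝ) else p) else 1 - p)
      + (if false = true then (if e ∈ E then 0 else p) else 1 - p))
      = if e ∈ E then 1 - p else 1 := by
    intro e; by_cases he : e ∈ E <;> simp [he] <;> ring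
  rw [Finset.prod_congr rfl (fun e _ => this e), Finset.prod_ite_mem,
    Finset.univ_inter, Finset.prod_const]


open Classical in
lemma bexpect_count {ι κ : Type*} [Fintype ι] [Fintype κ] (p : ℝ)
    (Q : κ → (ι → Bool) → Prop) :
    bexpect p (fun ω => ((Finset.univ.filter fun A => Q A ω).card : ℝ))
      = ∑ A : κ, bprob p {ω | Q A ω} := by
  unfold bexpect bprob
  rw [Finset.sum_comm]
  apply Finset.sum_congr rfl
  intro ω _
  simp only [Set.mem_setOf_eq, Finset.card_filter]
  push_cast
  rw [Finset.mul_sum]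
  apply Finset.sum_congr rfl
  intro A _
  by_cases h : Q A ω <;> simp [h]


open Classical in
lemma indep_iff (n : ℕ) (A : Finset (Finset (Fin n))) (ω : Sym2 (Finset (Fin n)) → Bool) :
    inducesIndep n ω A ↔
      ∀ e ∈ (A.sym2.filter fun e =>
        ¬ e.IsDiag ∧ ∀ S ∈ e, ∀ T ∈ e, S ≠ T → Disjoint S T), ω e = false := by
  constructor
  · intro h e he
    rw [Finset.mem_filter] at he
    obtain ⟨heA, hdiag, hcond⟩ := he
    induction e with
    | _ S T =>
      rw [Finset.mk_mem_sym2_iff] at heA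
      have hne : S ≠ T := by
        intro hST; exact hdiag (by simp [hST])
      exact h S heA.1 T heA.2 hne
        (hcond S (Sym2.mem_mk_left S T) T (Sym2.mem_mk_right S T) hne)
  · intro h S hS T hT hne hdisj
    apply h
    rw [Finset.mem_filter]
    refine ⟨Finset.mk_mem_sym2_iff.2 ⟨hS, hT⟩, ?_, ?_⟩
    · simp [Sym2.mk_isDiag_iff, hne]
    · intro S' hS' T' hT' hne'
      rw [Sym2.mem_iff] at hS' hT'
      rcases hS' with rfl | rfl <;> rcases hT' with rfl | rfl
      · exact absurd rfl hne'
      · exact hdisj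
      · exact hdisj.symm
      · exact absurd rfl hne'


lemma mem_kstar_iff {n r : ℕ} {x : Fin n} {S : Finset (Fin n)} :
    S ∈ kstar n r x ↔ S.card = r ∧ x ∈ S := by
  simp [kstar]


lemma kstar_card (n r : ℕ) (hr : 1 ≤ r) (x : Fin n) :
    (kstar n r x).card = (n - 1).choose (r - 1) := by
  classical
  have : (kstar n r x).card = ((Finset.univ.erase x).powersetCard (r - 1)).card := by
    refine Finset.card_bij' (fun S _ => S.erase x) (fun T _ => insert x T)
      ?_ ?_ ?_ ?_
    · intro S hS
      rw [mem_kstar_iff] at hS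
      rw [Finset.mem_powersetCard]
      refine ⟨fun y hy => ?_, by rw [Finset.card_erase_of_mem hS.2, hS.1]⟩
      rw [Finset.mem_erase] at hy ⊢
      exact ⟨hy.1, Finset.mem_univ _⟩
    · intro T hT
      rw [Finset.mem_powersetCard] at hT
      have hx : x ∉ T := fun h => (Finset.mem_erase.1 (hT.1 h)).1 rfl
      rw [mem_kstar_iff, Finset.card_insert_of_notMem hx, hT.2]
      exact ⟨by omega, Finset.mem_insert_self x T⟩
    · intro S hS
      rw [mem_kstar_iff] at hS
      exact Finset.insert_erase hS.2
    · intro T hT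
      rw [Finset.mem_powersetCard] at hT
      have hx : x ∉ T := fun h => (Finset.mem_erase.1 (hT.1 h)).1 rfl
      exact Finset.erase_insert hx
  rw [this, Finset.card_powersetCard, Finset.card_erase_of_mem (Finset.mem_univ x),
    Finset.card_univ, Fintype.card_fin]


lemma struct (n r : ℕ) (hn : 0 < n) (hr : 1 ≤ r) (A : Finset (Finset (Fin n)))
    (h1 : isRFamily n r A) (h2 : A.card = (n - 1).choose (r - 1) + 1)
    (h3 : maxDeg n A = (n - 1).choose (r - 1)) :
    ∃ x B, x ∉ B ∧ B.card = r ∧ A = insert B (kstar n r x) := by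
  classical
  have hne : (Finset.univ : Finset (Fin n)).Nonempty := by
    simp [Finset.univ_nonempty_iff, Fin.pos_iff_nonempty.1 hn]
  obtain ⟨x, -, hx⟩ := Finset.exists_mem_eq_sup Finset.univ hne
    (fun x : Fin n => (subAt n A x).card)
  rw [maxDeg] at h3
  rw [h3] at hx
  have hsub : subAt n A x ⊆ kstar n r x := by
    intro S hS
    rw [subAt, Finset.mem_filter] at hS
    exact mem_kstar_iff.2 ⟨h1 S hS.1, hS.2⟩
  have heq : subAt n A x = kstar n r x :=
    Finset.eq_of_subset_of_card_le hsub (by rw [kstar_card n r hr x, ← hx])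
  have hkA : kstar n r x ⊆ A := heq ▸ Finset.filter_subset _ A
  have hcard : (A \ kstar n r x).card = 1 := by
    rw [Finset.card_sdiff_of_subset hkA, kstar_card n r hr x, h2]
    omega
  obtain ⟨B, hB⟩ := Finset.card_eq_one.1 hcard
  have hBA : B ∈ A ∧ B ∉ kstar n r x := by
    have := hB ▸ Finset.mem_singleton_self B
    rwa [Finset.mem_sdiff] at this
  have hBr : B.card = r := h1 B hBA.1
  have hxB : x ∉ B := fun h => hBA.2 (mem_kstar_iff.2 ⟨hBr, h⟩)
  refine ⟨x, B, hxB, hBr, ?_⟩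
  have h4 := Finset.sdiff_union_of_subset hkA
  rw [← h4, hB]
  ext S; simp [or_comm]


open Classical in
lemma count_le (n r : ℕ) (hn : 0 < n) (hr : 1 ≤ r) :
    (Finset.univ.filter fun A : Finset (Finset (Fin n)) =>
      isRFamily n r A ∧ A.card = (n - 1).choose (r - 1) + 1 ∧
        maxDeg n A = (n - 1).choose (r - 1)).card ≤ n * n.choose r := by
  classical
  have h := Finset.card_le_card_of_surjOn
    (s := (Finset.univ : Finset (Fin n)) ×ˢ (Finset.univ : Finset (Fin n)).powersetCard r)
    (t := Finset.univ.filter fun A : Finset (Finset (Fin n)) =>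
      isRFamily n r A ∧ A.card = (n - 1).choose (r - 1) + 1 ∧
        maxDeg n A = (n - 1).choose (r - 1))
    (fun q => insert q.2 (kstar n r q.1)) ?_
  · refine h.trans (le_of_eq ?_)
    simp [Finset.card_product, Finset.card_powersetCard]
  · intro A hA
    simp only [Finset.coe_filter, Set.mem_setOf_eq, Finset.mem_univ, true_and] at hA
    obtain ⟨x, B, hxB, hBr, hAeq⟩ := struct n r hn hr A hA.1 hA.2.1 hA.2.2
    refine ⟨(x, B), ?_, hAeq.symm⟩
    rw [Finset.mem_coe, Finset.mem_product]
    exact ⟨Finset.mem_univ x, Finset.mem_powersetCard.2 ⟨Finset.subset_univ B, hBr⟩⟩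


open Classical in
lemma eCount_ge (n r : ℕ) (hr : 1 ≤ r) (x : Fin n) (B : Finset (Fin n))
    (hxB : x ∉ B) (hBr : B.card = r) (A : Finset (Finset (Fin n)))
    (hA : insert B (kstar n r x) ⊆ A) :
    (n - r - 1).choose (r - 1) ≤ eCount n A := by
  classical
  have hBA : B ∈ A := hA (Finset.mem_insert_self B _)
  have hstar : kstar n r x ⊆ A := fun S hS => hA (Finset.mem_insert_of_mem hS)
  set P := ((Finset.univ : Finset (Fin n)) \ insert x B).powersetCard (r - 1) with hP
  have hPcard : P.card = (n - r - 1).choose (r - 1) := by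
    rw [hP, Finset.card_powersetCard, Finset.card_sdiff_of_subset (Finset.subset_univ _),
      Finset.card_insert_of_notMem hxB, hBr, Finset.card_univ, Fintype.card_fin,
      Nat.sub_sub]
  rw [← hPcard]
  apply Finset.card_le_card_of_injOn (fun T => s(B, insert x T))
  · intro T hT
    rw [hP, Finset.mem_coe, Finset.mem_powersetCard] at hT
    have hxT : x ∉ T := fun h => by
      have := hT.1 h
      rw [Finset.mem_sdiff] at this
      exact this.2 (Finset.mem_insert_self x B)
    have hTB : Disjoint T B := by
      rw [Finset.disjoint_left]
      intro a ha hab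
      have := hT.1 ha
      rw [Finset.mem_sdiff] at this
      exact this.2 (Finset.mem_insert_of_mem hab)
    have hS : insert x T ∈ kstar n r x := by
      rw [mem_kstar_iff, Finset.card_insert_of_notMem hxT, hT.2]
      exact ⟨by omega, Finset.mem_insert_self x T⟩
    have hdisj : Disjoint B (insert x T) := by
      rw [Finset.disjoint_insert_right]
      exact ⟨hxB, hTB.symm⟩
    have hne : B ≠ insert x T := by
      intro h
      exact hxB (h ▸ Finset.mem_insert_self x T)
    rw [Finset.mem_coe, Finset.mem_filter]
    refine ⟨Finset.mk_mem_sym2_iff.2 ⟨hBA, hstar hS⟩, ?_, ?_⟩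
    · simp [Sym2.mk_isDiag_iff, hne]
    · intro S' hS' T' hT' hne'
      rw [Sym2.mem_iff] at hS' hT'
      rcases hS' with rfl | rfl <;> rcases hT' with rfl | rfl
      · exact absurd rfl hne'
      · exact hdisj
      · exact hdisj.symm
      · exact absurd rfl hne'
  · intro T hT T' hT' heq
    simp only [Finset.mem_coe, hP, Finset.mem_powersetCard] at hT hT'
    have hxT : x ∉ T := fun h => by
      have := hT.1 h; rw [Finset.mem_sdiff] at this
      exact this.2 (Finset.mem_insert_self x B)
    have hxT' : x ∉ T' := fun h => by
      have := hT'.1 h; rw [Finset.mem_sdiff] at this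
      exact this.2 (Finset.mem_insert_self x B)
    rw [Sym2.eq_iff] at heq
    rcases heq with ⟨-, h2⟩ | ⟨h1, -⟩
    · have : (insert x T).erase x = (insert x T').erase x := by rw [h2]
      rwa [Finset.erase_insert hxT, Finset.erase_insert hxT'] at this
    · rw [h1] at hxB
      exact absurd (Finset.mem_insert_self x T') hxB


lemma bexpect_nonneg {ι : Type*} [Fintype ι] {p : ℝ} (hp0 : 0 ≤ p) (hp1 : p ≤ 1)
    {X : (ι → Bool) → ℝ} (hX : ∀ ω, 0 ≤ X ω) : 0 ≤ bexpect p X := by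
  unfold bexpect
  apply Finset.sum_nonneg
  intro ω _
  apply mul_nonneg _ (hX ω)
  apply Finset.prod_nonneg
  intro e _
  by_cases h : ω e <;> simp [h, hp0] <;> linarith


open Classical in
lemma bexpect_Ycount_le (n r : ℕ) (hn : 0 < n) (hr : 1 ≤ r) (p : ℝ)
    (hp0 : 0 ≤ p) (hp1 : p ≤ 1) :
    bexpect p (fun ω : Sym2 (Finset (Fin n)) → Bool => (Ycount n r ω : ℝ))
      ≤ (n * n.choose r : ℕ) * (1 - p) ^ ((n - r - 1).choose (r - 1)) := by
  set P := fun A : Finset (Finset (Fin n)) =>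
    isRFamily n r A ∧ A.card = (n - 1).choose (r - 1) + 1 ∧
      maxDeg n A = (n - 1).choose (r - 1) with hPdef
  have h0 : (fun ω : Sym2 (Finset (Fin n)) → Bool => (Ycount n r ω : ℝ))
      = fun ω => (((@Finset.filter (Finset (Finset (Fin n)))
          (fun A => P A ∧ inducesIndep n ω A)
          (fun a => Classical.propDecidable _) Finset.univ)).card : ℝ) := by
    funext ω
    unfold Ycount
    norm_cast
    apply Finset.card_nbij id (fun A hA => ?_) (fun A _ B _ h => h) (fun A hA => ?_)
    · simp only [Finset.mem_coe, Finset.mem_filter] at hA ⊢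
      tauto
    · simp only [Set.mem_image, Finset.mem_coe, Finset.mem_filter] at hA ⊢
      exact ⟨A, by tauto, rfl⟩
  have h1 : bexpect p (fun ω : Sym2 (Finset (Fin n)) → Bool => (Ycount n r ω : ℝ))
      = ∑ A : Finset (Finset (Fin n)), bprob p {ω | P A ∧ inducesIndep n ω A} := by
    exact (congrArg (bexpect p) h0).trans
      (bexpect_count p (fun A ω => P A ∧ inducesIndep n ω A))
  rw [h1]
  have hterm : ∀ A : Finset (Finset (Fin n)),
      bprob p {ω | P A ∧ inducesIndep n ω A}
        = if P A then (1 - p) ^ (eCount n A) else 0 := by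
    intro A
    by_cases hPA : P A
    · rw [if_pos hPA]
      have hset : {ω : Sym2 (Finset (Fin n)) → Bool | P A ∧ inducesIndep n ω A}
          = {ω : Sym2 (Finset (Fin n)) → Bool | ∀ e ∈ (A.sym2.filter fun e =>
              ¬ e.IsDiag ∧ ∀ S ∈ e, ∀ T ∈ e, S ≠ T → Disjoint S T), ω e = false} := by
        ext ω
        simp only [Set.mem_setOf_eq]
        rw [← indep_iff]
        tauto
      rw [hset, bprob_all_false]
      rfl
    · rw [if_neg hPA]
      unfold bprob
      apply Finset.sum_eq_zero
      intro ω _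
      rw [if_neg]
      simp only [Set.mem_setOf_eq]
      tauto
  refine le_trans (le_of_eq (Finset.sum_congr rfl fun A _ => hterm A)) ?_
  rw [Finset.sum_ite, Finset.sum_const_zero, add_zero]
  have hpow1 : (0:ℝ) ≤ 1 - p := by linarith
  have hsum : ∑ A ∈ Finset.univ.filter P, (1 - p) ^ (eCount n A)
      ≤ (Finset.univ.filter P).card • ((1 - p) ^ ((n - r - 1).choose (r - 1))) := by
    apply Finset.sum_le_card_nsmul
    intro A hA
    rw [Finset.mem_filter] at hA
    obtain ⟨x, B, hxB, hBr, hAeq⟩ := struct n r hn hr A hA.2.1 hA.2.2.1 hA.2.2.2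
    have hsub : insert B (kstar n r x) ⊆ A := hAeq ▸ Finset.Subset.refl _
    exact pow_le_pow_of_le_one hpow1 (by linarith)
      (eCount_ge n r hr x B hxB hBr A hsub)
  refine hsum.trans ?_
  rw [nsmul_eq_mul]
  apply mul_le_mul_of_nonneg_right _ (pow_nonneg hpow1 _)
  exact_mod_cast count_le n r hn hr


lemma pow_self_le_exp_mul_factorial : ∀ k : ℕ, (k : ℝ) ^ k ≤ Real.exp 1 ^ k * (Nat.factorial k)
  | 0 => by norm_num
  | (k+1) => by
    rcases Nat.eq_zero_or_pos k with rfl | hk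
    · have := Real.exp_one_gt_d9
      simp only [Nat.cast_zero, zero_add, pow_one, Nat.factorial_one, Nat.cast_one, mul_one]
      norm_num
    have hkR : (0:ℝ) < k := by exact_mod_cast hk
    have ih := pow_self_le_exp_mul_factorial k
    have h1 : ((k:ℝ) + 1) ^ k ≤ Real.exp 1 * (k:ℝ) ^ k := by
      have h2 : (k:ℝ) + 1 = (1 + 1/k) * k := by field_simp
      rw [h2, mul_pow]
      have h3 : (1 + 1/(k:ℝ)) ^ k ≤ Real.exp 1 := by
        have h4 : (1 + 1/(k:ℝ)) ≤ Real.exp (1/k) := by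
          have := Real.add_one_le_exp (1/(k:ℝ)); linarith
        calc (1 + 1/(k:ℝ)) ^ k ≤ Real.exp (1/k) ^ k := by
              apply pow_le_pow_left₀ (by positivity) h4
          _ = Real.exp 1 := by
              rw [← Real.exp_nat_mul]
              congr 1
              field_simp
        
      exact mul_le_mul_of_nonneg_right h3 (by positivity)
    push_cast
    calc ((k:ℝ) + 1) ^ (k+1) = ((k:ℝ)+1) * ((k:ℝ)+1)^k := by ring
      _ ≤ ((k:ℝ)+1) * (Real.exp 1 * (k:ℝ)^k) := by
          apply mul_le_mul_of_nonneg_left h1 (by positivity)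
      _ ≤ ((k:ℝ)+1) * (Real.exp 1 * (Real.exp 1 ^ k * (Nat.factorial k))) := by
          apply mul_le_mul_of_nonneg_left _ (by positivity)
          exact mul_le_mul_of_nonneg_left ih (Real.exp_pos 1).le
      _ = Real.exp 1 ^ (k+1) * (((k:ℝ)+1) * (Nat.factorial k)) := by ring
      _ = Real.exp 1 ^ (k+1) * (Nat.factorial (k+1)) := by
          rw [Nat.factorial_succ]
          push_cast
          ring


lemma self_le_choose (m : ℕ) : ∀ k : ℕ, 1 ≤ k → 2 * k ≤ m → m ≤ m.choose k
  | 0, h, _ => absurd h (by norm_num)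
  | 1, _, _ => by simp
  | (k+2), _, h2 => by
    have ih := self_le_choose m (k+1) (by omega) (by omega)
    refine ih.trans ?_
    apply Nat.choose_le_succ_of_lt_half_left
    omega


lemma choose_ratio (n r : ℕ) (hr : 1 ≤ r) (h2r : 2 * r ≤ n) :
    (n - 1).choose (r - 1) * (n - 2*r + 1) ^ (r - 1)
      ≤ (n - r - 1).choose (r - 1) * (n - 1) ^ (r - 1) := by
  have hA1 : (n - 2*r + 1) ^ (r-1) ≤ (n - r - 1).descFactorial (r-1) := by
    have h : n - r - 1 + 1 - (r - 1) = n - 2*r + 1 := by omega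
    have := Nat.pow_sub_le_descFactorial (n - r - 1) (r - 1)
    rwa [h] at this
  have hA1' : (n - 2*r + 1) ^ (r-1) ≤ (Nat.factorial (r-1)) * (n - r - 1).choose (r-1) := by
    rwa [Nat.descFactorial_eq_factorial_mul_choose] at hA1
  have hA2 : (n-1).descFactorial (r-1) ≤ (n-1)^(r-1) := Nat.descFactorial_le_pow _ _
  have hA2' : (Nat.factorial (r-1)) * (n-1).choose (r-1) ≤ (n-1)^(r-1) := by
    rwa [Nat.descFactorial_eq_factorial_mul_choose] at hA2
  calc (n - 1).choose (r - 1) * (n - 2*r + 1) ^ (r - 1)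
      ≤ (n - 1).choose (r - 1) * ((Nat.factorial (r-1)) * (n - r - 1).choose (r-1)) :=
        Nat.mul_le_mul_left _ hA1'
    _ = (n - r - 1).choose (r-1) * ((Nat.factorial (r-1)) * (n-1).choose (r-1)) := by ring
    _ ≤ (n - r - 1).choose (r-1) * (n-1)^(r-1) := Nat.mul_le_mul_left _ hA2'


/-- for `ε ∈ (0, 1/2)`, `2 ≤ r(n) = o(n^{1/2})` and
`p(n) = (1+ε) p_c(n, r(n))`, the expectation `E[Y_n]` tends to `0`. -/
theorem expect_Ycount_tendsto_zero (ε : ℝ) (hε : ε ∈ Set.Ioo (0 : ℝ) (1 / 2))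
    (r : ℕ → ℕ) (hr : ∀ n, 2 ≤ r n)
    (hro : (fun n => (r n : ℝ)) =o[atTop] fun n : ℕ => (n : ℝ) ^ ((1 : ℝ) / 2)) :
    Tendsto
      (fun n => bexpect ((1 + ε) * pc n (r n))
        (fun ω : Sym2 (Finset (Fin n)) → Bool => (Ycount n (r n) ω : ℝ)))
      atTop (nhds 0) := by
  obtain ⟨hε0, hε2⟩ := hε
  set δ₀ : ℝ := (ε/2)/(1+ε) with hδ₀def
  have hδ₀pos : 0 < δ₀ := by positivity
  have hδ₀id : (1+ε) * δ₀ = ε/2 := by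
    rw [hδ₀def]; field_simp
  set c₀ : ℝ := min (1/4) (Real.sqrt δ₀ / 2) with hc₀def
  have hc₀pos : 0 < c₀ := by
    apply lt_min (by norm_num)
    positivity
  have hc₀sq : c₀^2 ≤ δ₀/4 := by
    have h1 : c₀ ≤ Real.sqrt δ₀ / 2 := min_le_right _ _
    have h2 : (Real.sqrt δ₀ / 2)^2 = δ₀/4 := by
      rw [div_pow, Real.sq_sqrt hδ₀pos.le]; norm_num
    calc c₀^2 ≤ (Real.sqrt δ₀ / 2)^2 := by
          apply pow_le_pow_left₀ hc₀pos.le h1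
      _ = δ₀/4 := h2
  have hc₀4 : c₀ ≤ 1/4 := min_le_left _ _
  have hLog : Tendsto (fun n : ℕ => Real.log n) atTop atTop :=
    Real.tendsto_log_atTop.comp tendsto_natCast_atTop_atTop
  -- eventual facts
  have hev1 : ∀ᶠ n : ℕ in atTop, (r n : ℝ) ≤ c₀ * Real.sqrt n := by
    filter_upwards [hro.bound hc₀pos] with n h
    rw [Real.norm_eq_abs, Real.norm_eq_abs, abs_of_nonneg (by positivity : (0:ℝ) ≤ (r n :ℝ)),
      abs_of_nonneg (by positivity : (0:ℝ) ≤ (n:ℝ) ^ ((1:ℝ)/2)), ← Real.sqrt_eq_rpow] at h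
    exact h
  have hev2 : ∀ᶠ n : ℕ in atTop, 4/ε ≤ Real.log n := hLog.eventually_ge_atTop _
  have hev3 : ∀ᶠ n : ℕ in atTop, Real.log n ≤ (1/8) * Real.sqrt n := by
    have h := (isLittleO_log_rpow_atTop (show (0:ℝ) < 1/2 by norm_num)).bound
      (show (0:ℝ) < 1/8 by norm_num)
    filter_upwards [tendsto_natCast_atTop_atTop.eventually h] with n hn
    have h0 : (0:ℝ) ≤ (n:ℝ) ^ ((1:ℝ)/2) := by positivity
    calc Real.log n ≤ |Real.log n| := le_abs_self _
      _ ≤ 1/8 * |(n:ℝ)^((1:ℝ)/2)| := hn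
      _ = 1/8 * Real.sqrt n := by rw [abs_of_nonneg h0, ← Real.sqrt_eq_rpow]
  have hev4 : ∀ᶠ n : ℕ in atTop, 100 ≤ n := eventually_ge_atTop 100
  have key : ∀ᶠ n : ℕ in atTop,
      0 ≤ bexpect ((1 + ε) * pc n (r n))
          (fun ω : Sym2 (Finset (Fin n)) → Bool => (Ycount n (r n) ω : ℝ)) ∧
      bexpect ((1 + ε) * pc n (r n))
          (fun ω : Sym2 (Finset (Fin n)) → Bool => (Ycount n (r n) ω : ℝ))
        ≤ Real.exp (-(ε/2) * Real.log n) := by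
    filter_upwards [hev1, hev2, hev3, hev4] with n h1 h2 h3 h4
    set rr := r n with hrrdef
    set R := (rr : ℝ) with hRdef
    set L := Real.log n with hLdef
    have hR2 : (2:ℝ) ≤ R := by rw [hRdef]; exact_mod_cast hr n
    have hεL : 4 ≤ ε * L := by
      rw [div_le_iff₀ hε0] at h2; linarith [h2]
    have hL8 : 8 ≤ L := by nlinarith only [hεL, hε2, hε0, h2]
    have hn0 : 0 < n := by omega
    have hnR : (0:ℝ) < n := by exact_mod_cast hn0
    -- basic facts
    have hsqnn : (0:ℝ) ≤ Real.sqrt n := Real.sqrt_nonneg _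
    have hsq2 : Real.sqrt n * Real.sqrt n = (n:ℝ) := Real.mul_self_sqrt hnR.le
    have hn100 : (100:ℝ) ≤ (n:ℝ) := by exact_mod_cast h4
    have hsq10 : 10 ≤ Real.sqrt n := by nlinarith only [hsq2, hsqnn, hn100]
    have hRsqrt : R ≤ Real.sqrt n / 4 := by nlinarith only [h1, hc₀4, hsqnn]
    have hδ₀small : δ₀ ≤ 1/4 := by
      rw [hδ₀def]
      have h5 : ε/2/(1+ε) ≤ ε/2 := div_le_self (by positivity) (by linarith)
      linarith
    have hR2n : R^2 ≤ (δ₀/4) * n := by nlinarith only [h1, hR2, hc₀sq, hc₀pos, hsqnn, hsq2]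
    have hR16 : R^2 ≤ (n:ℝ)/16 := by nlinarith only [hR2n, hδ₀small, hnR, hδ₀pos]
    have hRn32 : 32 * R ≤ (n:ℝ) := by nlinarith only [hR16, hR2]
    have hrr2 : 2 ≤ rr := hr n
    have hrrn : 32 * rr ≤ n := by
      rw [hRdef] at hRn32; exact_mod_cast hRn32
    have hr1 : 1 ≤ rr := by omega
    have h2r : 2 * rr ≤ n := by omega
    -- log bounds
    have hRpos : (0:ℝ) < R := by linarith
    have hlogR : Real.log R ≤ L/2 := by
      have h5 : R ≤ Real.sqrt n := by linarith
      have h6 := Real.log_le_log hRpos h5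
      rw [Real.log_sqrt hnR.le] at h6
      rw [hLdef]; linarith
    have hlogR0 : 0 ≤ Real.log R := Real.log_nonneg (by linarith)
    set N := (R+1)*L - R*Real.log R with hNdef
    have hN1 : (R/2+1)*L ≤ N := by rw [hNdef]; nlinarith only [hlogR, hR2, hL8, hlogR0]
    have hN0 : (0:ℝ) ≤ N := le_trans (by nlinarith only [hR2, hL8]) hN1
    have hNle : N ≤ (R+1)*L := by rw [hNdef]; nlinarith only [hlogR0, hR2]
    -- C bounds
    have hCnat : n - 1 ≤ (n-1).choose (rr - 1) :=
      self_le_choose (n-1) (rr-1) (by omega) (by omega)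
    set C := (((n-1).choose (rr-1) : ℕ) : ℝ) with hCdef
    have hCge : (n:ℝ) - 1 ≤ C := by
      have h5 : ((n-1 : ℕ):ℝ) ≤ C := by rw [hCdef]; exact_mod_cast hCnat
      have hcast : ((n-1:ℕ):ℝ) = (n:ℝ) - 1 := by
        push_cast [show 1 ≤ n by omega]; ring
      linarith [hcast ▸ h5]
    have hCpos : (0:ℝ) < C := by linarith
    -- p
    have hpc : pc n rr = N / C := by
      rw [pc, hNdef, hCdef, hRdef, hLdef]
    set p := (1+ε) * pc n rr with hpdef
    have hpN : p = (1+ε) * (N / C) := by rw [hpdef, hpc]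
    have hp0 : 0 ≤ p := by
      rw [hpN]
      apply mul_nonneg (by linarith)
      exact div_nonneg hN0 hCpos.le
    have hstep1 : (R+1)*L ≤ (Real.sqrt n/2)*L := by nlinarith only [hRsqrt, hsq10, hL8]
    have hstep2 : (Real.sqrt n/2)*L ≤ (Real.sqrt n/2)*(Real.sqrt n/8) := by nlinarith only [h3, hsqnn, hsq10]
    have hp1 : p ≤ 1 := by
      rw [hpN, ← mul_div_assoc, div_le_one hCpos]
      nlinarith only [hstep1, hstep2, hsq2, hn100, hNle, hN0, hCge, hε2, hε0]
    -- ratio bound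
    have hratioNat := choose_ratio n rr hr1 h2r
    set m := (n - rr - 1).choose (rr - 1) with hmdef
    have hcastineq : C * ((n:ℝ) - 2*R + 1)^(rr-1) ≤ (m:ℝ) * ((n:ℝ)-1)^(rr-1) := by
      have h5 : (((n-1).choose (rr-1) : ℕ):ℝ) * (((n - 2*rr + 1:ℕ)):ℝ)^(rr-1)
          ≤ ((m:ℕ):ℝ) * (((n-1:ℕ)):ℝ)^(rr-1) := by exact_mod_cast hratioNat
      have hb : ((n - 2*rr + 1 : ℕ):ℝ) = (n:ℝ) - 2*R + 1 := by
        rw [hRdef]; push_cast [h2r]; ring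
      have ha : ((n - 1 : ℕ):ℝ) = (n:ℝ) - 1 := by
        push_cast [show 1 ≤ n by omega]; ring
      rw [hb, ha] at h5
      exact h5
    set a := (n:ℝ) - 1 with hadef
    set b := (n:ℝ) - 2*R + 1 with hbdef
    have hapos : (0:ℝ) < a := by rw [hadef]; linarith
    have hbpos : (0:ℝ) < b := by rw [hbdef]; nlinarith only [hRn32, hn100]
    have hx : -2 ≤ b/a - 1 := by
      have : 0 < b/a := by positivity
      linarith
    have hbern := one_add_mul_le_pow hx (rr - 1)
    have hk : ((rr - 1 : ℕ):ℝ) = R - 1 := by rw [hRdef]; push_cast [hr1]; ring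
    have hbern' : 1 + (R-1)*(b/a - 1) ≤ (b/a)^(rr-1) := by
      have e : (1 + (b/a - 1)) = b/a := by ring
      rw [e, hk] at hbern
      exact hbern
    have hlb : 1 - δ₀ ≤ (b/a)^(rr-1) := by
      have hba : b/a - 1 = (2 - 2*R)/a := by
        rw [div_sub_one hapos.ne']; congr 1; rw [hbdef, hadef]; ring
      have h6 : (R-1)*(2*R-2) ≤ δ₀ * a := by
        rw [hadef]; nlinarith only [hR2n, hn100, hR2, hδ₀pos]
      have h7 : -δ₀ ≤ (R-1)*((2-2*R)/a) := by
        rw [mul_div_assoc']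
        rw [le_div_iff₀ hapos]
        nlinarith only [h6]
      calc 1 - δ₀ ≤ 1 + (R-1)*(b/a-1) := by rw [hba]; linarith
        _ ≤ (b/a)^(rr-1) := hbern'
    have hmC : (1-δ₀) * C ≤ (m:ℝ) := by
      have hdiv : (b/a)^(rr-1) = b^(rr-1)/a^(rr-1) := div_pow b a _
      have hpw : (0:ℝ) < a^(rr-1) := by positivity
      have h8 : C * ((b/a)^(rr-1)) ≤ (m:ℝ) := by
        rw [hdiv, ← mul_div_assoc, div_le_iff₀ hpw]
        exact hcastineq
      nlinarith only [hlb, h8, hCpos]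
    have hpm : (1 + ε/2) * N ≤ p * (m:ℝ) := by
      have h8 : p * (m:ℝ) = (1+ε) * N * ((m:ℝ)/C) := by
        rw [hpN]; field_simp
      have h9 : (1 - δ₀) ≤ (m:ℝ)/C := by rw [le_div_iff₀ hCpos]; linarith
      have h10 : (1+ε) * N * (1-δ₀) ≤ (1+ε)*N*((m:ℝ)/C) :=
        mul_le_mul_of_nonneg_left h9 (by nlinarith only [hN0, hε0])
      have h11 : (1+ε)*N*(1-δ₀) = (1+ε/2)*N := by linear_combination (-N) * hδ₀id
      rw [h8]; linarith
    -- combinatorial bound and exp estimates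
    have hB := bexpect_Ycount_le n rr hn0 hr1 p hp0 hp1
    rw [← hmdef] at hB
    have hnexp : (n:ℝ) = Real.exp L := by rw [hLdef, Real.exp_log hnR]
    have hfact := pow_self_le_exp_mul_factorial rr
    have hdesc : (Nat.factorial rr) * (n.choose rr) ≤ n^rr := by
      have h12 := Nat.descFactorial_le_pow n rr
      rwa [Nat.descFactorial_eq_factorial_mul_choose] at h12
    have hdescR : (Nat.factorial rr : ℝ) * (n.choose rr : ℝ) ≤ (n:ℝ)^rr := by
      exact_mod_cast hdesc
    have hRrr : (0:ℝ) < R ^ rr := by positivity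
    have he1 : Real.exp 1 ^ rr = Real.exp R := by
      rw [← Real.exp_nat_mul, mul_one, hRdef]
    have hchoose : (n.choose rr : ℝ) * R^rr ≤ Real.exp R * (n:ℝ)^rr := by
      calc (n.choose rr : ℝ) * R^rr
          ≤ (n.choose rr : ℝ) * (Real.exp 1 ^ rr * (Nat.factorial rr)) := by
            rw [hRdef]
            exact mul_le_mul_of_nonneg_left hfact (Nat.cast_nonneg _)
        _ = Real.exp 1 ^ rr * ((Nat.factorial rr:ℝ) * (n.choose rr:ℝ)) := by ring
        _ ≤ Real.exp 1 ^ rr * (n:ℝ)^rr :=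
            mul_le_mul_of_nonneg_left hdescR (by positivity)
        _ = Real.exp R * (n:ℝ)^rr := by rw [he1]
    have hRrr_exp : R ^ rr = Real.exp (R * Real.log R) := by
      rw [← Real.exp_log hRrr, Real.log_pow, hRdef]
    have hnrr : (n:ℝ)^rr = Real.exp (R * L) := by
      rw [hnexp, ← Real.exp_nat_mul, hRdef]
    have hNR : (n:ℝ) * (n.choose rr:ℝ) ≤ Real.exp (N + R) := by
      have h12 : (n.choose rr : ℝ) ≤ Real.exp (R + R*L - R*Real.log R) := by
        have h13 := hchoose
        rw [hRrr_exp, hnrr] at h13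
        have h14 : (n.choose rr:ℝ)
            ≤ (Real.exp R * Real.exp (R*L))/Real.exp (R*Real.log R) := by
          rw [le_div_iff₀ (Real.exp_pos _)]; exact h13
        calc (n.choose rr:ℝ) ≤ _ := h14
          _ = Real.exp (R + R*L - R*Real.log R) := by
            rw [← Real.exp_add, ← Real.exp_sub]
      calc (n:ℝ) * (n.choose rr:ℝ)
          ≤ Real.exp L * Real.exp (R + R*L - R*Real.log R) :=
            mul_le_mul (le_of_eq hnexp) h12 (Nat.cast_nonneg _) (Real.exp_pos _).le
        _ = Real.exp (N + R) := by
            rw [← Real.exp_add, hNdef]; congr 1; ring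
    have hpowm : (1-p)^m ≤ Real.exp (-(p * (m:ℝ))) := by
      have h14 : 1 - p ≤ Real.exp (-p) := by
        have := Real.add_one_le_exp (-p); linarith
      calc (1-p)^m ≤ (Real.exp (-p))^m := pow_le_pow_left₀ (by linarith) h14 m
        _ = Real.exp (-(p * (m:ℝ))) := by
            rw [← Real.exp_nat_mul]; congr 1; ring
    have h15 : 4*R ≤ (ε*L)*R := by nlinarith only [hεL, hR2]
    have h16 : (ε/2)*((R/2+1)*L) ≤ (ε/2)*N := by nlinarith only [hN1, hε0]
    have hfinal : N + R - p*(m:ℝ) ≤ -(ε/2)*L := by nlinarith only [hpm, h15, h16]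
    constructor
    · exact bexpect_nonneg hp0 hp1 (fun ω => Nat.cast_nonneg _)
    · calc bexpect p (fun ω : Sym2 (Finset (Fin n)) → Bool => (Ycount n rr ω : ℝ))
          ≤ ((n * n.choose rr : ℕ):ℝ) * (1-p)^m := hB
        _ ≤ Real.exp (N+R) * Real.exp (-(p*(m:ℝ))) := by
            refine mul_le_mul ?_ hpowm (pow_nonneg (by linarith) m) (Real.exp_pos _).le
            exact_mod_cast hNR
        _ = Real.exp (N + R - p*(m:ℝ)) := by rw [← Real.exp_add]; congr 1
        _ ≤ Real.exp (-(ε/2)*L) := Real.exp_le_exp.2 hfinal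

  -- squeeze
  have hupper : Tendsto (fun n : ℕ => Real.exp (-(ε/2) * Real.log n)) atTop (nhds 0) := by
    apply Real.tendsto_exp_atBot.comp
    have h1 : Tendsto (fun n : ℕ => (ε/2) * Real.log n) atTop atTop :=
      hLog.const_mul_atTop (by positivity)
    have h2 := tendsto_neg_atTop_atBot.comp h1
    have : (fun n : ℕ => -(ε/2) * Real.log n) = fun n : ℕ => -((ε/2) * Real.log n) := by
      funext n; ring
    rw [this]
    exact h2
  exact tendsto_of_tendsto_of_tendsto_of_le_of_le' tendsto_const_nhds hupper
    (key.mono fun n h => h.1) (key.mono fun n h => h.2)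

end
end

section
/- Let n ≥ r ≥ 1, write N = binom(n−1, r−1), and let A ⊆ [n]^(r) with |A| = N and (r+4)·d(A) < N. Then e(A) ≥ 2N²/(r+4). -/
open Finset Filter Real Asymptotics

noncomputable section

/-- edge bound for families of small maximum degree: if
`|A| = N = C(n-1, r-1)` and `(r+4) d(A) < N`, then `e(A) ≥ 2N²/(r+4)`. -/
theorem eCount_ge_of_small_maxDeg (n r : ℕ) (hr : 1 ≤ r) (hrn : r ≤ n)
    (A : Finset (Finset (Fin n))) (hA : isRFamily n r A)
    (hcard : A.card = (n - 1).choose (r - 1))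
    (hdeg : (r + 4) * maxDeg n A < (n - 1).choose (r - 1)) :
    2 * ((n - 1).choose (r - 1) : ℝ) ^ 2 / ((r : ℝ) + 4) ≤ (eCount n A : ℝ) := by
  classical
  set N := (n - 1).choose (r - 1) with hN
  set d := maxDeg n A with hd
  -- Step 1: each S ∈ A is disjoint from many members of A
  have hstep : ∀ S ∈ A, N ≤ (A.filter fun T => Disjoint S T).card + r * d := by
    intro S hS
    have hsub : A.filter (fun T => ¬ Disjoint S T) ⊆ S.biUnion (fun x => subAt n A x) := by
      intro T hT
      simp only [Finset.mem_filter] at hT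
      obtain ⟨x, hxS, hxT⟩ := Finset.not_disjoint_iff.mp hT.2
      exact Finset.mem_biUnion.mpr ⟨x, hxS, Finset.mem_filter.mpr ⟨hT.1, hxT⟩⟩
    have h1 : (A.filter fun T => ¬ Disjoint S T).card ≤ r * d := by
      calc (A.filter fun T => ¬ Disjoint S T).card
          ≤ (S.biUnion (fun x => subAt n A x)).card := Finset.card_le_card hsub
        _ ≤ ∑ x ∈ S, (subAt n A x).card := Finset.card_biUnion_le
        _ ≤ ∑ x ∈ S, d := Finset.sum_le_sum fun x _ =>
            Finset.le_sup (f := fun x : Fin n => (subAt n A x).card) (Finset.mem_univ x)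
        _ = S.card * d := by rw [Finset.sum_const, smul_eq_mul]
        _ = r * d := by rw [hA S hS]
    have h2 := Finset.card_filter_add_card_filter_not
      (s := A) (p := fun T => Disjoint S T)
    omega
  -- ordered disjoint pairs
  set D := (A ×ˢ A).filter (fun p => Disjoint p.1 p.2) with hDdef
  have hD1 : D.card = ∑ S ∈ A, (A.filter fun T => Disjoint S T).card := by
    simp only [hDdef, Finset.card_filter, Finset.sum_product]
  -- D.card = 2 * eCount
  set F := (A.sym2.filter fun e => ¬ e.IsDiag ∧ ∀ S ∈ e, ∀ T ∈ e, S ≠ T → Disjoint S T)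
    with hFdef
  have hne : ∀ S ∈ A, S.Nonempty := by
    intro S hS
    rw [← Finset.card_pos, hA S hS]; omega
  have hmem : ∀ p ∈ D, s(p.1, p.2) ∈ F := by
    rintro ⟨S, T⟩ hp
    simp only [hDdef, Finset.mem_filter, Finset.mem_product] at hp
    obtain ⟨⟨hS, hT⟩, hdis⟩ := hp
    have hST : S ≠ T := by
      rintro rfl
      exact (hne S hS).ne_empty (disjoint_self.mp hdis)
    simp only [hFdef, Finset.mem_filter, Finset.mk_mem_sym2_iff, Sym2.mk_isDiag_iff]
    refine ⟨⟨hS, hT⟩, hST, ?_⟩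
    intro S' hS' T' hT' hne'
    rw [Sym2.mem_iff] at hS' hT'
    rcases hS' with rfl | rfl <;> rcases hT' with rfl | rfl
    · exact absurd rfl hne'
    · exact hdis
    · exact hdis.symm
    · exact absurd rfl hne'
  have hfiber : ∀ e ∈ F, (D.filter fun p => s(p.1, p.2) = e).card = 2 := by
    intro e he
    induction e using Sym2.ind with
    | _ a b =>
      simp only [hFdef, Finset.mem_filter, Finset.mk_mem_sym2_iff, Sym2.mk_isDiag_iff] at he
      obtain ⟨⟨haA, hbA⟩, hab, hdis⟩ := he
      have hd2 : Disjoint a b :=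
        hdis a (Sym2.mem_mk_left a b) b (Sym2.mem_mk_right a b) hab
      have heq : D.filter (fun p => s(p.1, p.2) = s(a, b)) = {(a, b), (b, a)} := by
        ext p
        simp only [hDdef, Finset.mem_filter, Finset.mem_product, Finset.mem_insert,
          Finset.mem_singleton, Sym2.eq_iff, Prod.ext_iff]
        constructor
        · rintro ⟨-, h⟩; exact h
        · rintro (⟨h1, h2⟩ | ⟨h1, h2⟩) <;> subst h1 <;> subst h2
          · exact ⟨⟨⟨haA, hbA⟩, hd2⟩, Or.inl ⟨rfl, rfl⟩⟩
          · exact ⟨⟨⟨hbA, haA⟩, hd2.symm⟩, Or.inr ⟨rfl, rfl⟩⟩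
      rw [heq, Finset.card_pair]
      simp only [ne_eq, Prod.ext_iff, not_and]
      intro h; exact absurd h hab
  have hD2 : D.card = 2 * eCount n A := by
    rw [Finset.card_eq_sum_card_fiberwise hmem, Finset.sum_congr rfl hfiber,
      Finset.sum_const, smul_eq_mul]
    have : eCount n A = F.card := by
      simp only [eCount, hFdef]
    rw [this, Nat.mul_comm]
  -- combine: N * N ≤ 2 * eCount + N * (r * d)
  have hmain : N * N ≤ 2 * eCount n A + N * (r * d) := by
    have : ∑ _S ∈ A, N ≤ ∑ S ∈ A, ((A.filter fun T => Disjoint S T).card + r * d) :=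
      Finset.sum_le_sum hstep
    rw [Finset.sum_const, smul_eq_mul, Finset.sum_add_distrib, ← hD1,
      Finset.sum_const, smul_eq_mul, hcard, hD2] at this
    omega
  -- cast to ℝ and finish
  have hR1 : (N : ℝ) * N ≤ 2 * (eCount n A : ℝ) + N * (r * d) := by
    exact_mod_cast hmain
  have hR2 : ((r : ℝ) + 4) * d < N := by exact_mod_cast hdeg
  have hr4 : (0 : ℝ) < (r : ℝ) + 4 := by positivity
  rw [div_le_iff₀ hr4]
  have hN0 : (0 : ℝ) ≤ N := Nat.cast_nonneg _
  have hr0 : (1 : ℝ) ≤ r := by exact_mod_cast hr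
  have hd0 : (0 : ℝ) ≤ d := Nat.cast_nonneg _
  nlinarith [mul_nonneg (mul_nonneg (le_trans zero_le_one hr0) hN0)
    (sub_nonneg.mpr hR2.le), hR1, hR2]

end
end

section
/- For every ε ∈ (0, 1/2) there exists n₀ such that for all n ≥ n₀, all integers r with 2 ≤ r ≤ log n, and all real α with (log n)^{-2} ≤ α ≤ (1 − ε/2)/(r+1), one has (r/(α·n)) · (n^{r+1}/r^r)^{α/2} < 1. -/
open Finset Filter Real Asymptotics

noncomputable section

/-- analytic inequality used in Lemma 8: for `ε ∈ (0, 1/2)`, all large `n`,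
all `2 ≤ r ≤ log n`, and all `α` with `(log n)⁻² ≤ α ≤ (1 - ε/2)/(r+1)`, one has
`(r/(αn)) (n^{r+1}/r^r)^{α/2} < 1`. -/
theorem analytic_inequality (ε : ℝ) (hε : ε ∈ Set.Ioo (0 : ℝ) (1 / 2)) :
    ∃ n₀ : ℕ, ∀ n : ℕ, n₀ ≤ n → ∀ r : ℕ, 2 ≤ r → (r : ℝ) ≤ Real.log n →
      ∀ α : ℝ, ((Real.log n) ^ 2)⁻¹ ≤ α → α ≤ (1 - ε / 2) / ((r : ℝ) + 1) →
        ((r : ℝ) / (α * n)) * (((n : ℝ) ^ (r + 1) / (r : ℝ) ^ r) ^ (α / 2)) < 1 := by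
  obtain ⟨hε0, hε2⟩ := hε
  refine ⟨⌈Real.exp 145⌉₊, fun n hn r hr hrlog α hα1 hα2 => ?_⟩
  have hn0 : 0 < n := lt_of_lt_of_le (Nat.ceil_pos.mpr (Real.exp_pos _)) hn
  have hn0' : (0:ℝ) < n := by exact_mod_cast hn0
  have hL : (145:ℝ) ≤ Real.log n := by
    rw [Real.le_log_iff_exp_le hn0']
    exact le_trans (Nat.le_ceil _) (Nat.cast_le.mpr hn)
  set L := Real.log n with hLdef
  have hL0 : (0:ℝ) < L := by linarith
  have hr0 : (0:ℝ) < r := by positivity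
  have hr2 : (2:ℝ) ≤ r := by exact_mod_cast hr
  have hα0 : 0 < α := lt_of_lt_of_le (by positivity) hα1
  have hD : (0:ℝ) < (n:ℝ) ^ (r + 1) / (r:ℝ) ^ r := by positivity
  have hprod : 0 < ((r : ℝ) / (α * n)) * (((n : ℝ) ^ (r + 1) / (r : ℝ) ^ r) ^ (α / 2)) := by
    positivity
  rw [← Real.log_neg_iff hprod]
  rw [Real.log_mul (by positivity) (by positivity), Real.log_rpow hD,
    Real.log_div (by positivity) (by positivity),
    Real.log_div (by positivity) (by positivity),
    Real.log_mul (ne_of_gt hα0) (ne_of_gt hn0'), Real.log_pow, Real.log_pow]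
  push_cast
  -- goal: log r - (log α + L) + α/2 * ((r+1)*L - r*log r) < 0
  have h1 : Real.log r ≤ Real.log L := Real.log_le_log hr0 hrlog
  have h2 : -(2 * Real.log L) ≤ Real.log α := by
    have := Real.log_le_log (by positivity) hα1
    rw [Real.log_inv, Real.log_pow, neg_le] at this
    push_cast at this
    linarith
  have h3 : α * ((r:ℝ) + 1) ≤ 1 := by
    have hrp : (0:ℝ) < (r:ℝ) + 1 := by linarith
    have := (le_div_iff₀ hrp).mp hα2
    nlinarith
  have hlogr0 : 0 ≤ Real.log r := Real.log_nonneg (by linarith)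
  have h4 : 0 ≤ α * ((r:ℝ) * Real.log r) := by positivity
  have hs := Real.sq_sqrt hL0.le
  have hs0 := Real.sqrt_nonneg L
  have h5 : Real.log L ≤ 2 * Real.sqrt L := by
    have h5a : Real.log (Real.sqrt L) ≤ Real.sqrt L - 1 :=
      Real.log_le_sub_one_of_pos (Real.sqrt_pos.mpr hL0)
    have h5b : Real.log (Real.sqrt L) = Real.log L / 2 := Real.log_sqrt hL0.le
    linarith
  have hkey : 6 * Real.sqrt L < L / 2 := by nlinarith
  nlinarith [mul_le_mul_of_nonneg_left h3 (le_of_lt hL0)]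

end
end
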